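/- Let s ≥ 1 and p > 1 be integers, and r ≥ 1. Then gcd(p^r + 1, p^s − 1) equals 1 if s/gcd(r,s) is odd and p is even; equals 2 if s/gcd(r,s) is odd and p is odd; and equals p^{gcd(r,s)} + 1 if s/gcd(r,s) is even. -/

import Mathlib

open Finset

-- L1: if g divides p^a-1 and p^b-1 then g divides p^(gcd a b)-1
lemma L1 {g p a b : ℕ} (hp : 1 ≤ p) (ha : g ∣ p ^ a - 1) (hb : g ∣ p ^ b - 1) :
    g ∣ p ^ Nat.gcd a b - 1 := by
  have key : ∀ n : ℕ, g ∣ p ^ n - 1 ↔ ((p : ZMod g)) ^ n = 1 := by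
    intro n
    rw [← ZMod.natCast_eq_zero_iff, Nat.cast_sub (Nat.one_le_pow _ _ hp),
      Nat.cast_pow, Nat.cast_one, sub_eq_zero]
  rw [key a] at ha
  rw [key b] at hb
  rw [key]
  exact pow_gcd_eq_one.mpr ⟨ha, hb⟩

-- L2: for p odd, n odd, ¬ 2*(a+1) ∣ a^n+1 where a = p^d
lemma L2 {a n : ℕ} (hodd : Odd a) (hn : Odd n) : ¬ (2 * (a + 1) ∣ a ^ n + 1) := by
  intro h
  have hZ : (2 * ((a : ℤ) + 1) ∣ (a : ℤ) ^ n + 1) := by exact_mod_cast h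
  set Q : ℤ := ∑ i ∈ range n, (-(a : ℤ)) ^ i with hQ
  have hfac : Q * ((a : ℤ) + 1) = (a : ℤ) ^ n + 1 := by
    have := geom_sum_mul (-(a : ℤ)) n
    rw [hn.neg_pow] at this
    have : Q * ((a:ℤ) + 1) = -(-(a:ℤ)^n - 1) := by rw [← this]; ring
    linarith [this]
  have h2Q : (2 : ℤ) ∣ Q := by
    rw [← hfac] at hZ
    have hpos : (0:ℤ) < (a:ℤ) + 1 := by positivity
    rcases hZ with ⟨c, hc⟩
    refine ⟨c, ?_⟩
    have : Q * ((a:ℤ)+1) = (2 * c) * ((a:ℤ)+1) := by rw [hc]; ring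
    exact mul_right_cancel₀ (by positivity) this
  -- Q is odd: in ZMod 2 it equals n
  have : ((Q : ZMod 2)) = 0 := by
    have := (ZMod.intCast_zmod_eq_zero_iff_dvd Q 2).mpr h2Q
    exact this
  rw [hQ] at this
  push_cast at this
  have ha2 : ((a : ZMod 2)) = 1 := by
    have hm : (a : ZMod 2) = ((a % 2 : ℕ) : ZMod 2) := by rw [ZMod.natCast_mod]
    rw [hm, Nat.odd_iff.mp hodd]; norm_num
  rw [ha2] at this
  simp only [CharTwo.neg_eq, one_pow, sum_const, card_range, nsmul_eq_mul, mul_one] at this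
  have hd2 : (2 : ℕ) ∣ n := by
    have h0 : ((n:ℕ) : ZMod 2) = 0 := by simpa using this
    exact (ZMod.natCast_eq_zero_iff n 2).mp h0
  exact (Nat.not_even_iff_odd.mpr hn) (even_iff_two_dvd.mpr hd2)

/-- For integers `p > 1`, `r, s ≥ 1`: `gcd(p^r + 1, p^s - 1)` equals `1` if
`s / gcd(r,s)` is odd and `p` even, `2` if `s / gcd(r,s)` is odd and `p` odd,
and `p^{gcd(r,s)} + 1` if `s / gcd(r,s)` is even. -/
theorem gcd_pow_add_one_pow_sub_one (p r s : ℕ) (hp : 1 < p) (hr : 1 ≤ r) (hs : 1 ≤ s) :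
    (Odd (s / Nat.gcd r s) → Even p → Nat.gcd (p ^ r + 1) (p ^ s - 1) = 1) ∧
    (Odd (s / Nat.gcd r s) → Odd p → Nat.gcd (p ^ r + 1) (p ^ s - 1) = 2) ∧
    (Even (s / Nat.gcd r s) → Nat.gcd (p ^ r + 1) (p ^ s - 1) = p ^ Nat.gcd r s + 1) := by
  set d := Nat.gcd r s with hdd
  set g := Nat.gcd (p ^ r + 1) (p ^ s - 1) with hgg
  have hp1 : 1 ≤ p := hp.le
  have hdpos : 0 < d := Nat.gcd_pos_of_pos_left s hr
  have hrd : d ∣ r := Nat.gcd_dvd_left r s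
  have hsd : d ∣ s := Nat.gcd_dvd_right r s
  set r' := r / d with hr'd
  set s' := s / d with hs'd
  have hrr : r = d * r' := (Nat.mul_div_cancel' hrd).symm
  have hss : s = d * s' := (Nat.mul_div_cancel' hsd).symm
  have cop : Nat.Coprime r' s' := Nat.coprime_div_gcd_div_gcd hdpos
  have hg1 : g ∣ p ^ r + 1 := Nat.gcd_dvd_left _ _
  have hg2 : g ∣ p ^ s - 1 := Nat.gcd_dvd_right _ _
  have hpr1 : 1 ≤ p ^ r := Nat.one_le_pow _ _ (by omega)
  have hps1 : 1 ≤ p ^ s := Nat.one_le_pow _ _ (by omega)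
  -- p^r + 1 divides p^(2r) - 1
  have sqfac : ∀ m : ℕ, p ^ (2 * m) - 1 = (p ^ m + 1) * (p ^ m - 1) := by
    intro m
    have h1 : 1 ≤ p ^ m := Nat.one_le_pow _ _ (by omega)
    obtain ⟨b, hb⟩ : ∃ b, p ^ m = b + 1 := ⟨p ^ m - 1, by omega⟩
    have : p ^ (2 * m) = (p ^ m) ^ 2 := by rw [two_mul, pow_add, pow_two]
    rw [this, hb]
    have h2 : (b + 1) ^ 2 = (b + 1 + 1) * b + 1 := by ring
    rw [h2]
    simp [Nat.add_sub_cancel]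
  have h2r : p ^ r + 1 ∣ p ^ (2 * r) - 1 := ⟨p ^ r - 1, sqfac r⟩
  have hgd2 : g ∣ p ^ (Nat.gcd (2 * r) s) - 1 := L1 hp1 (hg1.trans h2r) hg2
  -- gcd (2r) s divides 2d and is divisible by d
  have hde : d ∣ Nat.gcd (2 * r) s := Nat.dvd_gcd (hrd.mul_left 2) hsd
  have he2d : Nat.gcd (2 * r) s ∣ 2 * d := by
    have : Nat.gcd (2 * r) s ∣ Nat.gcd (2 * r) (2 * s) :=
      Nat.dvd_gcd (Nat.gcd_dvd_left _ _) ((Nat.gcd_dvd_right _ _).mul_left 2)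
    rwa [Nat.gcd_mul_left] at this
  refine ⟨?_, ?_, ?_⟩
  · -- s' odd, p even
    intro hodds hevenp
    have hed : Nat.gcd (2 * r) s = d := by
      obtain ⟨k, hk⟩ := hde
      have hk2 : k ∣ 2 := by
        have : d * k ∣ d * 2 := by rw [← hk, mul_comm d 2]; exact he2d
        exact (Nat.mul_dvd_mul_iff_left hdpos).mp this
      rcases (Nat.dvd_prime Nat.prime_two).mp hk2 with h1 | h1
      · rw [hk, h1, mul_one]
      · exfalso
        have : 2 * d ∣ s := by rw [← mul_comm d 2, ← h1, ← hk]; exact Nat.gcd_dvd_right _ _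
        have : 2 ∣ s' := by
          obtain ⟨t, ht⟩ := this
          refine ⟨t, ?_⟩
          have : d * s' = d * (2 * t) := by rw [← hss, ht]; ring
          exact Nat.eq_of_mul_eq_mul_left hdpos this
        exact (Nat.not_even_iff_odd.mpr hodds) (even_iff_two_dvd.mpr this)
    rw [hed] at hgd2
    have hpdr : p ^ d - 1 ∣ p ^ r - 1 := by
      have := Nat.sub_dvd_pow_sub_pow (p ^ d) 1 r'
      rwa [one_pow, ← pow_mul, ← hrr] at this
    have hgsub : g ∣ 2 := by
      have h1 := Nat.dvd_sub hg1 (hgd2.trans hpdr)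
      have h2 : (p ^ r + 1) - (p ^ r - 1) = 2 := by omega
      rwa [h2] at h1
    have hpre : 2 ∣ p ^ r := dvd_pow hevenp.two_dvd (by omega)
    rcases (Nat.dvd_prime Nat.prime_two).mp hgsub with h1 | h1
    · exact h1
    · exfalso
      have := h1 ▸ hg1
      omega
  · -- s' odd, p odd
    intro hodds hoddp
    have hed : Nat.gcd (2 * r) s = d := by
      obtain ⟨k, hk⟩ := hde
      have hk2 : k ∣ 2 := by
        have : d * k ∣ d * 2 := by rw [← hk, mul_comm d 2]; exact he2d
        exact (Nat.mul_dvd_mul_iff_left hdpos).mp this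
      rcases (Nat.dvd_prime Nat.prime_two).mp hk2 with h1 | h1
      · rw [hk, h1, mul_one]
      · exfalso
        have : 2 * d ∣ s := by rw [← mul_comm d 2, ← h1, ← hk]; exact Nat.gcd_dvd_right _ _
        have : 2 ∣ s' := by
          obtain ⟨t, ht⟩ := this
          refine ⟨t, ?_⟩
          have : d * s' = d * (2 * t) := by rw [← hss, ht]; ring
          exact Nat.eq_of_mul_eq_mul_left hdpos this
        exact (Nat.not_even_iff_odd.mpr hodds) (even_iff_two_dvd.mpr this)
    rw [hed] at hgd2
    have hpdr : p ^ d - 1 ∣ p ^ r - 1 := by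
      have := Nat.sub_dvd_pow_sub_pow (p ^ d) 1 r'
      rwa [one_pow, ← pow_mul, ← hrr] at this
    have hgsub : g ∣ 2 := by
      have h1 := Nat.dvd_sub hg1 (hgd2.trans hpdr)
      have h2 : (p ^ r + 1) - (p ^ r - 1) = 2 := by omega
      rwa [h2] at h1
    have hoddpr : Odd (p ^ r) := hoddp.pow
    have hoddps : Odd (p ^ s) := hoddp.pow
    have h2g : 2 ∣ g := by
      refine Nat.dvd_gcd ?_ ?_
      · obtain ⟨k, hk⟩ := hoddpr; omega
      · obtain ⟨k, hk⟩ := hoddps; omega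
    exact Nat.dvd_antisymm hgsub h2g
  · -- s' even
    intro hevens
    have hoddr' : Odd r' := by
      rcases Nat.even_or_odd r' with he | ho
      · exfalso
        have h2 : 2 ∣ Nat.gcd r' s' := Nat.dvd_gcd he.two_dvd hevens.two_dvd
        rw [cop] at h2
        omega
      · exact ho
    have hed : Nat.gcd (2 * r) s = 2 * d := by
      refine Nat.dvd_antisymm he2d (Nat.dvd_gcd (mul_dvd_mul_left 2 hrd) ?_)
      obtain ⟨t, ht⟩ := hevens
      exact ⟨t, by rw [hss, ht]; ring⟩
    rw [hed, sqfac d] at hgd2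
    have hBr : p ^ d + 1 ∣ p ^ r + 1 := by
      have := Odd.nat_add_dvd_pow_add_pow (p ^ d) 1 hoddr'
      rwa [one_pow, ← pow_mul, ← hrr] at this
    have hBs : p ^ d + 1 ∣ p ^ s - 1 := by
      have h1 : p ^ d + 1 ∣ p ^ (2 * d) - 1 := ⟨p ^ d - 1, sqfac d⟩
      have h2 : p ^ (2 * d) - 1 ∣ p ^ s - 1 := by
        obtain ⟨t, ht⟩ := hevens
        have := Nat.sub_dvd_pow_sub_pow (p ^ (2 * d)) 1 t
        rwa [one_pow, ← pow_mul, show 2 * d * t = s by rw [hss, ht]; ring] at this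
      exact h1.trans h2
    have hBg : p ^ d + 1 ∣ g := Nat.dvd_gcd hBr hBs
    -- g divides 2 * (p^d + 1)
    have hpdr : p ^ d - 1 ∣ p ^ r - 1 := by
      have := Nat.sub_dvd_pow_sub_pow (p ^ d) 1 r'
      rwa [one_pow, ← pow_mul, ← hrr] at this
    have hpd1 : 1 ≤ p ^ d := Nat.one_le_pow _ _ (by omega)
    have hc2 : Nat.gcd g (p ^ d - 1) ∣ 2 := by
      have hca : Nat.gcd g (p ^ d - 1) ∣ p ^ r + 1 := (Nat.gcd_dvd_left _ _).trans hg1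
      have hcb : Nat.gcd g (p ^ d - 1) ∣ p ^ r - 1 := (Nat.gcd_dvd_right _ _).trans hpdr
      have h1 := Nat.dvd_sub hca hcb
      have h2 : (p ^ r + 1) - (p ^ r - 1) = 2 := by omega
      rwa [h2] at h1
    have hg2B : g ∣ 2 * (p ^ d + 1) := by
      calc g ∣ Nat.gcd g ((p ^ d + 1) * (p ^ d - 1)) := Nat.dvd_gcd dvd_rfl hgd2
        _ ∣ Nat.gcd g (p ^ d + 1) * Nat.gcd g (p ^ d - 1) := gcd_mul_dvd_mul_gcd g _ _
        _ ∣ (p ^ d + 1) * 2 := mul_dvd_mul (Nat.gcd_dvd_right _ _) hc2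
        _ = 2 * (p ^ d + 1) := mul_comm _ _
    -- now split on parity of p
    rcases Nat.even_or_odd p with hevenp | hoddp
    · have hoddg : ¬ 2 ∣ g := by
        intro h2
        have hpre : 2 ∣ p ^ r := dvd_pow hevenp.two_dvd (by omega)
        have := h2.trans hg1
        omega
      have hcop : Nat.Coprime g 2 :=
        Nat.coprime_comm.mp ((Nat.Prime.coprime_iff_not_dvd Nat.prime_two).mpr hoddg)
      have : g ∣ p ^ d + 1 := hcop.dvd_of_dvd_mul_left hg2B
      exact Nat.dvd_antisymm this hBg
    · obtain ⟨k, hk⟩ := hBg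
      have hk2 : k ∣ 2 := by
        have h1 : (p ^ d + 1) * k ∣ (p ^ d + 1) * 2 := by
          rw [← hk, mul_comm (p ^ d + 1) 2]; exact hg2B
        exact (Nat.mul_dvd_mul_iff_left (by omega : 0 < p ^ d + 1)).mp h1
      rcases (Nat.dvd_prime Nat.prime_two).mp hk2 with h1 | h1
      · rw [hk, h1, mul_one]
      · exfalso
        have hgg2 : 2 * (p ^ d + 1) ∣ p ^ r + 1 := by
          rw [show 2 * (p ^ d + 1) = (p ^ d + 1) * k by rw [h1]; ring, ← hk]
          exact hg1
        have := L2 (hoddp.pow : Odd (p ^ d)) hoddr'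
        rw [hrr, pow_mul] at hgg2
        exact this hgg2
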